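/- Let E be a Banach space, let K be a weakly compact subset of E equipped with the weak topology, and let μ be a finite Radon measure on K. Then the support of μ is separable in the norm topology of E. -/

import Mathlib

open scoped BoundedContinuousFunction

/-- A semitopological semigroup: a semigroup with a topology in which
multiplication is separately continuous. -/
class SemitopoSemigroup (S : Type*) [Semigroup S] [TopologicalSpace S] : Prop where
  cont_left : ∀ t : S, Continuous fun s : S => t * s
  cont_right : ∀ t : S, Continuous fun s : S => s * t

section Ell

variable {S : Type*}

/-- Left translation: `(l_s f)(t) = f (s * t)`. -/
def lTrans [Mul S] (s : S) (f : S → ℂ) : S → ℂ := fun t => f (s * t)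

/-- Right translation: `(r_s f)(t) = f (t * s)`. -/
def rTrans [Mul S] (s : S) (f : S → ℂ) : S → ℂ := fun t => f (t * s)

/-- A bounded complex-valued function, i.e. an element of `ℓ^∞(S)`. -/
def BddFun (f : S → ℂ) : Prop := ∃ C : ℝ, ∀ t, ‖f t‖ ≤ C

/-- The supremum norm on `ℓ^∞(S)`. -/
noncomputable def supNorm (f : S → ℂ) : ℝ := ⨆ t, ‖f t‖

/-- `X` is a norm-closed linear subspace of `ℓ^∞(S)` containing the constants and
invariant under all left and right translations. -/
structure IsTransInvSubspace [Semigroup S] (X : Set (S → ℂ)) : Prop where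
  bdd : ∀ f ∈ X, BddFun f
  add_mem : ∀ f ∈ X, ∀ g ∈ X, f + g ∈ X
  smul_mem : ∀ (c : ℂ), ∀ f ∈ X, c • f ∈ X
  const_mem : ∀ c : ℂ, (fun _ : S => c) ∈ X
  normClosed : ∀ f : S → ℂ, BddFun f →
    (∀ ε > 0, ∃ g ∈ X, ∀ t, ‖f t - g t‖ ≤ ε) → f ∈ X
  lTrans_mem : ∀ (s : S), ∀ f ∈ X, lTrans s f ∈ X
  rTrans_mem : ∀ (s : S), ∀ f ∈ X, rTrans s f ∈ X

/-- `m` is a left invariant mean on `X`: a linear functional with `‖m‖ = m 1 = 1`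
which is invariant under left translations. -/
structure IsLIM [Semigroup S] (X : Set (S → ℂ)) (m : (S → ℂ) → ℂ) : Prop where
  add : ∀ f ∈ X, ∀ g ∈ X, m (f + g) = m f + m g
  smul : ∀ (c : ℂ), ∀ f ∈ X, m (c • f) = c * m f
  norm_le : ∀ f ∈ X, ‖m f‖ ≤ supNorm f
  map_one : m (fun _ : S => (1 : ℂ)) = 1
  left_inv : ∀ (s : S), ∀ f ∈ X, m (lTrans s f) = m f

/-- `X` has a left invariant mean. -/
def HasLIM [Semigroup S] (X : Set (S → ℂ)) : Prop := ∃ m, IsLIM X m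

end Ell

/-- The weak topology on a normed space `E` over `𝕜`. -/
noncomputable def weakTop (𝕜 E : Type*) [NontriviallyNormedField 𝕜] [NormedAddCommGroup E]
    [NormedSpace 𝕜 E] : TopologicalSpace E :=
  ⨅ φ : E →L[𝕜] 𝕜, TopologicalSpace.induced φ inferInstance

section Semitopo

variable {S : Type*} [Semigroup S] [TopologicalSpace S] [SemitopoSemigroup S]

/-- Left translation as a map on `C(S)`, the bounded continuous functions. -/
noncomputable def lTransB (s : S) (F : S →ᵇ ℂ) : S →ᵇ ℂ :=
  F.compContinuous ⟨fun t => s * t, SemitopoSemigroup.cont_left s⟩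

/-- Right translation as a map on `C(S)`, the bounded continuous functions. -/
noncomputable def rTransB (s : S) (F : S →ᵇ ℂ) : S →ᵇ ℂ :=
  F.compContinuous ⟨fun t => t * s, SemitopoSemigroup.cont_right s⟩

/-- `F ∈ C(S)` is weakly almost periodic: its left orbit is relatively compact in
the weak topology of `C(S)`. -/
def IsWAPb (F : S →ᵇ ℂ) : Prop :=
  @IsCompact _ (weakTop ℂ (S →ᵇ ℂ))
    (@closure _ (weakTop ℂ (S →ᵇ ℂ)) (Set.range fun s => lTransB s F))

/-- `F ∈ C(S)` is almost periodic: its left orbit is relatively compact in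
the norm topology of `C(S)`. -/
def IsAPb (F : S →ᵇ ℂ) : Prop :=
  IsCompact (closure (Set.range fun s => lTransB s F))

/-- `F ∈ C(S)` is left uniformly continuous: `s ↦ l_s F` is norm continuous. -/
def IsLUCb (F : S →ᵇ ℂ) : Prop := Continuous fun s => lTransB s F

/-- `WAP(S)` as a subset of `ℓ^∞(S)`. -/
def WAPset (S : Type*) [Semigroup S] [TopologicalSpace S] [SemitopoSemigroup S] :
    Set (S → ℂ) := {f | ∃ F : S →ᵇ ℂ, ⇑F = f ∧ IsWAPb F}

/-- `AP(S)` as a subset of `ℓ^∞(S)`. -/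
def APset (S : Type*) [Semigroup S] [TopologicalSpace S] [SemitopoSemigroup S] :
    Set (S → ℂ) := {f | ∃ F : S →ᵇ ℂ, ⇑F = f ∧ IsAPb F}

/-- `LUC(S)` as a subset of `ℓ^∞(S)`. -/
def LUCset (S : Type*) [Semigroup S] [TopologicalSpace S] [SemitopoSemigroup S] :
    Set (S → ℂ) := {f | ∃ F : S →ᵇ ℂ, ⇑F = f ∧ IsLUCb F}

end Semitopo

section Action

variable {S : Type*} {E : Type*} [NormedAddCommGroup E] [NormedSpace ℝ E]

/-- `act` is an action of the semigroup `S` on the set `K`. -/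
def IsActionOn [Semigroup S] (act : S → E → E) (K : Set E) : Prop :=
  (∀ s : S, Set.MapsTo (act s) K K) ∧
    ∀ s s' : S, ∀ x ∈ K, act s (act s' x) = act (s * s') x

/-- The action is nonexpansive on `K`. -/
def NonexpansiveOn (act : S → E → E) (K : Set E) : Prop :=
  ∀ s : S, ∀ x ∈ K, ∀ y ∈ K, ‖act s x - act s y‖ ≤ ‖x - y‖

/-- The action is weakly separately continuous on `K`. -/
def WeaklySepContOn [TopologicalSpace S] (act : S → E → E) (K : Set E) : Prop :=
  (∀ s : S, @ContinuousOn E E (weakTop ℝ E) (weakTop ℝ E) (act s) K) ∧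
    (∀ x ∈ K, @Continuous S E _ (weakTop ℝ E) fun s => act s x)

/-- The action is jointly weakly continuous on `K`. -/
def JointlyWeaklyContOn [TopologicalSpace S] (act : S → E → E) (K : Set E) : Prop :=
  @ContinuousOn (S × E) E (@instTopologicalSpaceProd S E _ (weakTop ℝ E)) (weakTop ℝ E)
    (fun p => act p.1 p.2) (Set.univ ×ˢ K)

/-- The action is weakly equicontinuous on `K`: the family `{x ↦ s • x : s ∈ S}` is
equicontinuous for the weak topology on `K`. -/
def WeaklyEquicontOn (act : S → E → E) (K : Set E) : Prop :=
  ∀ x ∈ K, ∀ W ∈ @nhds E (weakTop ℝ E) 0,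
    ∃ U ∈ @nhdsWithin E (weakTop ℝ E) x K, ∀ y ∈ U, ∀ s : S, act s y - act s x ∈ W

/-- The action is weakly quasi-equicontinuous on `K`: every map in the closure of
`{x ↦ s • x : s ∈ S}` in `K^K` (with `K` carrying the weak topology) is continuous. -/
def WeaklyQuasiEquicontOn (act : S → E → E) (K : Set E) : Prop :=
  ∀ T ∈ @closure (↥K → ↥K)
      (@Pi.topologicalSpace ↥K (fun _ => ↥K)
        (fun _ => TopologicalSpace.induced Subtype.val (weakTop ℝ E)))
      {F : ↥K → ↥K | ∃ s : S, ∀ x : ↥K, (F x : E) = act s x},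
    @Continuous ↥K ↥K (TopologicalSpace.induced Subtype.val (weakTop ℝ E))
      (TopologicalSpace.induced Subtype.val (weakTop ℝ E)) T

end Action

/-- The weak topology of `E` restricted to a subset `K`. -/
noncomputable def weakSubTop (E : Type*) [NormedAddCommGroup E] [NormedSpace ℝ E]
    (K : Set E) : TopologicalSpace ↥K :=
  TopologicalSpace.induced Subtype.val (weakTop ℝ E)


section RadProof

open Filter Topology Set MeasureTheory

variable {E : Type*} [NormedAddCommGroup E] [NormedSpace ℝ E]

private lemma rad_clusterPt_eq_of_tendsto {v : ℕ → ℝ} {a b : ℝ}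
    (h : MapClusterPt a atTop v) (hv : Tendsto v atTop (𝓝 b)) : a = b := by
  have h1 : (𝓝 a ⊓ map v atTop).NeBot := h
  exact eq_of_nhds_neBot (h1.mono (inf_le_inf_left _ hv))

private lemma rad_star {X : Type*} [TopologicalSpace X] [CompactSpace X]
    {q : X → ℕ → ℝ} (hq : Continuous q) {C : Set X}
    (hdense : ∀ z : X, q z ∈ closure (q '' C))
    {u v : X → ℝ} (hu : Continuous u) (hv : Continuous v)
    (hufib : ∀ z z', q z = q z' → u z = u z')
    (hvfib : ∀ z z', q z = q z' → v z = v z')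
    (hagree : ∀ c ∈ C, u c = v c) (z : X) : u z = v z := by
  have hA : IsClosed {x : X | u x = v x} := isClosed_eq hu hv
  have himc : IsClosed (q '' {x : X | u x = v x}) := (hA.isCompact.image hq).isClosed
  have h1 : q '' C ⊆ q '' {x | u x = v x} := image_mono fun c hc => hagree c hc
  have h2 : q z ∈ q '' {x | u x = v x} := closure_minimal h1 himc (hdense z)
  obtain ⟨y, hy, hyq⟩ := h2
  rw [hufib z y hyq.symm, hy, hvfib y z hyq]

private lemma rad_ptwise_subseq {X : Type*} [TopologicalSpace X] [CompactSpace X]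
    (ι : X → E) (hι : ∀ φ : E →L[ℝ] ℝ, Continuous fun x => φ (ι x))
    {M : ℝ} (hM : ∀ x, ‖ι x‖ ≤ M)
    (φ : ℕ → E →L[ℝ] ℝ) (hφ : ∀ n, ‖φ n‖ ≤ 1) :
    ∃ (ψ : E →L[ℝ] ℝ) (σ : ℕ → ℕ), ‖ψ‖ ≤ 1 ∧ StrictMono σ ∧
      ∀ x : X, Tendsto (fun j => φ (σ j) (ι x)) atTop (𝓝 (ψ (ι x))) := by
  classical
  set q : X → ℕ → ℝ := fun x n => φ n (ι x) with hqdef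
  have hq : Continuous q := continuous_pi fun n => hι (φ n)
  have hbound : ∀ (n : ℕ) (x : X), |φ n (ι x)| ≤ M := by
    intro n x
    calc |φ n (ι x)| = ‖φ n (ι x)‖ := rfl
      _ ≤ ‖φ n‖ * ‖ι x‖ := (φ n).le_opNorm _
      _ ≤ 1 * M := mul_le_mul (hφ n) (hM x) (norm_nonneg _) zero_le_one
      _ = M := one_mul M
  -- a countable set C ⊆ X whose image under q is dense in the range of q
  obtain ⟨s, hsc, hsd⟩ := TopologicalSpace.exists_countable_dense ↥(q '' univ)
  set C : Set X := (fun y : ↥(q '' univ) => ((Set.mem_image _ _ _).mp y.2).choose) '' s with hCdef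
  have hCc : C.Countable := hsc.image _
  have hqC : q '' C = Subtype.val '' s := by
    rw [hCdef, image_image]
    apply image_congr
    intro y _
    exact ((Set.mem_image _ _ _).mp y.2).choose_spec.2
  have hdense : ∀ z : X, q z ∈ closure (q '' C) := by
    intro z
    rw [hqC]
    have h1 : (⟨q z, mem_image_of_mem q (mem_univ z)⟩ : ↥(q '' univ)) ∈ closure s := hsd _
    exact closure_subtype.mp h1
  -- extract a subsequence converging pointwise on C
  haveI : Countable ↥C := hCc.to_subtype
  have hPseq : IsSeqCompact (univ.pi fun _ : ↥C => Icc (-M) M) :=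
    (isCompact_univ_pi fun _ => isCompact_Icc).isSeqCompact
  have hmem : ∀ n, (fun c : ↥C => φ n (ι c.1)) ∈ univ.pi fun _ : ↥C => Icc (-M) M := by
    intro n
    rw [Set.mem_univ_pi]
    intro c
    exact abs_le.mp (hbound n c.1)
  obtain ⟨gl, -, σ, hσ, hgl⟩ := hPseq hmem
  have hglc : ∀ c : ↥C, Tendsto (fun j => φ (σ j) (ι c.1)) atTop (𝓝 (gl c)) := by
    intro c
    exact (tendsto_pi_nhds.mp hgl) c
  -- cluster functionals via Banach-Alaoglu
  have hcluster : ∀ τ : ℕ → ℕ, ∃ χ : E →L[ℝ] ℝ, ‖χ‖ ≤ 1 ∧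
      ∀ w : E, MapClusterPt (χ w) atTop fun j => φ (τ j) w := by
    intro τ
    have hBc : IsCompact
        (WeakDual.toStrongDual ⁻¹' Metric.closedBall (0 : StrongDual ℝ E) 1) :=
      WeakDual.isCompact_closedBall (𝕜 := ℝ) (E := E) (0 : StrongDual ℝ E) 1
    have hNB : (map (fun j => (StrongDual.toWeakDual (φ (τ j)))) atTop).NeBot :=
      Filter.NeBot.map atTop_neBot _
    have hle : map (fun j => (StrongDual.toWeakDual (φ (τ j)))) atTop ≤
        𝓟 (WeakDual.toStrongDual ⁻¹' Metric.closedBall (0 : StrongDual ℝ E) 1) := by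
      rw [le_principal_iff, mem_map]
      apply Eventually.of_forall
      intro j
      simp only [Set.mem_preimage, mem_closedBall_zero_iff]
      exact hφ (τ j)
    obtain ⟨χw, hχmem, hχcl⟩ := hBc.exists_clusterPt hle
    refine ⟨WeakDual.toStrongDual χw, ?_, ?_⟩
    · simpa only [Set.mem_preimage, mem_closedBall_zero_iff] using hχmem
    · intro w
      have hev : ContinuousAt (fun ξ : WeakDual ℝ E => ξ w) χw :=
        (WeakDual.eval_continuous w).continuousAt
      exact MapClusterPt.continuousAt_comp hev hχcl
  -- properties of cluster functionals
  have hfib : ∀ (τ : ℕ → ℕ) (χ : E →L[ℝ] ℝ),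
      (∀ w : E, MapClusterPt (χ w) atTop fun j => φ (τ j) w) →
      ∀ z z', q z = q z' → χ (ι z) = χ (ι z') := by
    intro τ χ hχ z z' hzz
    have h0 : Tendsto (fun j => φ (τ j) (ι z - ι z')) atTop (𝓝 0) := by
      have hzero : ∀ j, φ (τ j) (ι z - ι z') = 0 := by
        intro j
        rw [map_sub, sub_eq_zero]
        exact congrFun hzz (τ j)
      simp only [hzero]
      exact tendsto_const_nhds
    have h1 : χ (ι z - ι z') = 0 := rad_clusterPt_eq_of_tendsto (hχ (ι z - ι z')) h0
    rw [map_sub] at h1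
    linarith
  obtain ⟨ψ, hψ1, hψcl⟩ := hcluster σ
  refine ⟨ψ, σ, hψ1, hσ, ?_⟩
  intro x
  apply tendsto_of_subseq_tendsto
  intro ns hns
  obtain ⟨b, -, ms, hms, hbtend⟩ := tendsto_subseq_of_bounded (Metric.isBounded_Icc (-M) M)
    (x := fun n => φ (σ (ns n)) (ι x)) (fun n => abs_le.mp (hbound _ _))
  obtain ⟨ψ', hψ'1, hψ'cl⟩ := hcluster (fun i => σ (ns (ms i)))
  have hψ'x : ψ' (ι x) = b := rad_clusterPt_eq_of_tendsto (hψ'cl (ι x)) hbtend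
  have hsub : Tendsto (fun i => ns (ms i)) atTop atTop := hns.comp hms.tendsto_atTop
  have hψ'C : ∀ c ∈ C, ψ (ι c) = ψ' (ι c) := by
    intro c hc
    have e1 : ψ (ι c) = gl ⟨c, hc⟩ :=
      rad_clusterPt_eq_of_tendsto (hψcl (ι c)) (hglc ⟨c, hc⟩)
    have e2 : ψ' (ι c) = gl ⟨c, hc⟩ :=
      rad_clusterPt_eq_of_tendsto (hψ'cl (ι c)) ((hglc ⟨c, hc⟩).comp hsub)
    rw [e1, e2]
  have hfinal : ψ (ι x) = ψ' (ι x) :=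
    rad_star hq hdense (hι ψ) (hι ψ') (hfib σ ψ hψcl) (hfib _ ψ' hψ'cl) hψ'C x
  refine ⟨ms, ?_⟩
  rw [hfinal, hψ'x]
  exact hbtend

private lemma rad_main_abstract {X : Type*} [TopologicalSpace X] [CompactSpace X]
    [MeasurableSpace X] [BorelSpace X]
    (ι : X → E) (hι : ∀ φ : E →L[ℝ] ℝ, Continuous fun x => φ (ι x))
    (hinj : Function.Injective ι) {M : ℝ} (hM : ∀ x, ‖ι x‖ ≤ M)
    (μ : Measure X) [IsFiniteMeasure μ]
    {S : Set X} (hS : ∀ x ∈ S, ∀ U : Set X, IsOpen U → x ∈ U → μ U ≠ 0)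
    (hScl : IsClosed S) :
    TopologicalSpace.IsSeparable (ι '' S) := by
  classical
  rcases isEmpty_or_nonempty X with hE | hE
  · have : S = (∅ : Set X) := Set.eq_empty_of_isEmpty S
    rw [this]
    simpa using Set.countable_empty.isSeparable
  have hM0 : 0 ≤ M := le_trans (norm_nonneg _) (hM hE.some)
  have hcont : ∀ f g : E →L[ℝ] ℝ, Continuous fun x => |f (ι x) - g (ι x)| :=
    fun f g => ((hι f).sub (hι g)).abs
  have hintble : ∀ f g : E →L[ℝ] ℝ, Integrable (fun x => |f (ι x) - g (ι x)|) μ := by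
    intro f g
    apply Integrable.mono' (integrable_const ((‖f‖ + ‖g‖) * M)) (hcont f g).aestronglyMeasurable
    apply Eventually.of_forall
    intro x
    rw [Real.norm_eq_abs, abs_abs]
    calc |f (ι x) - g (ι x)| = ‖f (ι x) - g (ι x)‖ := (Real.norm_eq_abs _).symm
      _ ≤ ‖f (ι x)‖ + ‖g (ι x)‖ := norm_sub_le _ _
      _ ≤ ‖f‖ * ‖ι x‖ + ‖g‖ * ‖ι x‖ := add_le_add (f.le_opNorm _) (g.le_opNorm _)
      _ ≤ ‖f‖ * M + ‖g‖ * M := add_le_add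
          (mul_le_mul_of_nonneg_left (hM x) (norm_nonneg f))
          (mul_le_mul_of_nonneg_left (hM x) (norm_nonneg g))
      _ = (‖f‖ + ‖g‖) * M := by ring
  letI : PseudoMetricSpace {φ : E →L[ℝ] ℝ // ‖φ‖ ≤ 1} :=
    { dist := fun f g => ∫ x, |f.1 (ι x) - g.1 (ι x)| ∂μ
      dist_self := fun f => by simp
      dist_comm := fun f g =>
        integral_congr_ae (Eventually.of_forall fun x => abs_sub_comm _ _)
      dist_triangle := fun f g h => by
        show (∫ x, |f.1 (ι x) - h.1 (ι x)| ∂μ) ≤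
          (∫ x, |f.1 (ι x) - g.1 (ι x)| ∂μ) + ∫ x, |g.1 (ι x) - h.1 (ι x)| ∂μ
        rw [← integral_add (hintble _ _) (hintble _ _)]
        apply integral_mono (hintble _ _) ((hintble _ _).add (hintble _ _))
        intro x
        exact abs_sub_le _ _ _ }
  letI : UniformSpace {φ : E →L[ℝ] ℝ // ‖φ‖ ≤ 1} := PseudoMetricSpace.toUniformSpace
  letI : TopologicalSpace {φ : E →L[ℝ] ℝ // ‖φ‖ ≤ 1} := UniformSpace.toTopologicalSpace
  haveI : (uniformity {φ : E →L[ℝ] ℝ // ‖φ‖ ≤ 1}).IsCountablyGenerated :=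
    Metric.uniformity_basis_dist_inv_nat_succ.isCountablyGenerated
  have hdct : ∀ (χ : ℕ → {φ : E →L[ℝ] ℝ // ‖φ‖ ≤ 1}) (ψ : {φ : E →L[ℝ] ℝ // ‖φ‖ ≤ 1}),
      (∀ x : X, Tendsto (fun j => (χ j).1 (ι x)) atTop (𝓝 (ψ.1 (ι x)))) →
      Tendsto (fun j => dist (χ j) ψ) atTop (𝓝 0) := by
    intro χ ψ hpt
    have h00 : Tendsto (fun j => ∫ x, |(χ j).1 (ι x) - ψ.1 (ι x)| ∂μ) atTop
        (𝓝 (∫ _x, (0:ℝ) ∂μ)) := by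
      apply tendsto_integral_of_dominated_convergence (fun _ => 2 * M)
        (fun j => (hcont _ _).aestronglyMeasurable) (integrable_const _)
      · intro j
        apply Eventually.of_forall
        intro x
        rw [Real.norm_eq_abs, abs_abs]
        calc |(χ j).1 (ι x) - ψ.1 (ι x)| = ‖(χ j).1 (ι x) - ψ.1 (ι x)‖ := (Real.norm_eq_abs _).symm
          _ ≤ ‖(χ j).1 (ι x)‖ + ‖ψ.1 (ι x)‖ := norm_sub_le _ _
          _ ≤ ‖(χ j).1‖ * ‖ι x‖ + ‖ψ.1‖ * ‖ι x‖ := add_le_add ((χ j).1.le_opNorm _) (ψ.1.le_opNorm _)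
          _ ≤ 1 * M + 1 * M := add_le_add
              (mul_le_mul ((χ j).2) (hM x) (norm_nonneg _) zero_le_one)
              (mul_le_mul ψ.2 (hM x) (norm_nonneg _) zero_le_one)
          _ = 2 * M := by ring
      · apply Eventually.of_forall
        intro x
        have h9 := ((hpt x).sub (tendsto_const_nhds (x := ψ.1 (ι x)))).abs
        simpa using h9
    rw [integral_zero] at h00
    exact h00
  have hseq : IsSeqCompact (univ : Set {φ : E →L[ℝ] ℝ // ‖φ‖ ≤ 1}) := by
    intro u _
    obtain ⟨ψ, σ, hψ1, hσ, hconv⟩ := rad_ptwise_subseq ι hι hM (fun n => (u n).1) (fun n => (u n).2)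
    refine ⟨⟨ψ, hψ1⟩, mem_univ _, σ, hσ, ?_⟩
    exact tendsto_iff_dist_tendsto_zero.mpr (hdct (fun j => u (σ j)) ⟨ψ, hψ1⟩ fun x => hconv x)
  obtain ⟨Dc, hDcc, hDcd⟩ := hseq.totallyBounded.isSeparable
  -- the countable family Dc of functionals separates points of S
  have key : ∀ x ∈ S, ∀ y ∈ S, (∀ χ ∈ Dc, χ.1 (ι x) = χ.1 (ι y)) → ι x = ι y := by
    intro x hx y hy hxy
    rw [NormedSpace.eq_iff_forall_dual_eq ℝ]
    intro g
    have hgpos : (0:ℝ) < ‖g‖ + 1 := by positivity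
    have hg1 : ‖(‖g‖ + 1)⁻¹ • g‖ ≤ 1 := by
      rw [norm_smul, norm_inv, Real.norm_eq_abs, abs_of_pos hgpos,
        inv_mul_le_iff₀ hgpos, mul_one]
      linarith [norm_nonneg g]
    suffices h : ((‖g‖ + 1)⁻¹ • g) (ι x) = ((‖g‖ + 1)⁻¹ • g) (ι y) by
      simp only [ContinuousLinearMap.smul_apply, smul_eq_mul] at h
      exact mul_left_cancel₀ (inv_ne_zero hgpos.ne') h
    set φ0 : {φ : E →L[ℝ] ℝ // ‖φ‖ ≤ 1} := ⟨(‖g‖ + 1)⁻¹ • g, hg1⟩ with hφ0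
    have hmemcl : φ0 ∈ closure Dc := hDcd (mem_univ _)
    have hch : ∀ n : ℕ, ∃ χ ∈ Dc, dist φ0 χ < 1 / (n + 1) :=
      fun n => Metric.mem_closure_iff.mp hmemcl _ (by positivity)
    choose χ hχD hχd using hch
    obtain ⟨ψ, σ, hψ1, hσ, hconv⟩ := rad_ptwise_subseq ι hι hM (fun n => (χ n).1) (fun n => (χ n).2)
    have hd1 : Tendsto (fun j => dist (χ (σ j)) (⟨ψ, hψ1⟩ : {φ : E →L[ℝ] ℝ // ‖φ‖ ≤ 1}))
        atTop (𝓝 0) := hdct _ _ fun z => hconv z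
    have hd2 : Tendsto (fun j => dist φ0 (χ (σ j))) atTop (𝓝 0) := by
      apply tendsto_of_tendsto_of_tendsto_of_le_of_le (h := fun j => 1 / ((σ j : ℝ) + 1))
        tendsto_const_nhds (tendsto_one_div_add_atTop_nhds_zero_nat.comp hσ.tendsto_atTop)
        (fun j => dist_nonneg) (fun j => (hχd (σ j)).le)
    have hdist0 : dist φ0 (⟨ψ, hψ1⟩ : {φ : E →L[ℝ] ℝ // ‖φ‖ ≤ 1}) = 0 := by
      have hle : dist φ0 (⟨ψ, hψ1⟩ : {φ : E →L[ℝ] ℝ // ‖φ‖ ≤ 1}) ≤ 0 := by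
        have h3 := ge_of_tendsto' (hd2.add hd1)
          (fun j => dist_triangle φ0 (χ (σ j)) ⟨ψ, hψ1⟩)
        simpa using h3
      exact le_antisymm hle dist_nonneg
    have hae : (fun z => |φ0.1 (ι z) - ψ (ι z)|) =ᵐ[μ] 0 :=
      (integral_eq_zero_iff_of_nonneg (fun z => abs_nonneg _) (hintble _ _)).mp hdist0
    have hptS : ∀ z ∈ S, φ0.1 (ι z) = ψ (ι z) := by
      intro z hz
      by_contra hne
      have hδpos : 0 < |φ0.1 (ι z) - ψ (ι z)| := abs_pos.mpr (sub_ne_zero.mpr hne)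
      set δ := |φ0.1 (ι z) - ψ (ι z)| with hδ
      have hUopen : IsOpen {w : X | δ/2 < |φ0.1 (ι w) - ψ (ι w)|} :=
        isOpen_lt continuous_const (hcont _ _)
      have hzU : z ∈ {w : X | δ/2 < |φ0.1 (ι w) - ψ (ι w)|} := by
        simp only [mem_setOf_eq, ← hδ]
        linarith
      have hU0 : μ {w : X | δ/2 < |φ0.1 (ι w) - ψ (ι w)|} = 0 := by
        apply measure_mono_null _ (ae_iff.mp hae)
        intro w hw
        simp only [mem_setOf_eq] at hw ⊢
        intro h0
        rw [Pi.zero_apply] at h0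
        rw [h0] at hw
        linarith
      exact hS z hz _ hUopen hzU hU0
    have hxyψ : ψ (ι x) = ψ (ι y) := by
      have h1 := hconv x
      have h2 := hconv y
      have he : (fun j => (χ (σ j)).1 (ι x)) = fun j => (χ (σ j)).1 (ι y) :=
        funext fun j => hxy _ (hχD (σ j))
      rw [he] at h1
      exact tendsto_nhds_unique h1 h2
    rw [hptS x hx, hptS y hy, hxyψ]
  -- S is compact and embeds in a second-countable space, hence is separable
  haveI : Countable ↥Dc := hDcc.to_subtype
  haveI : CompactSpace ↥S := isCompact_iff_compactSpace.mp hScl.isCompact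
  have hresc : Continuous fun (z : ↥S) (χ : ↥Dc) => (χ.1).1 (ι z.1) :=
    continuous_pi fun χ => (hι _).comp continuous_subtype_val
  have hinjres : Function.Injective fun (z : ↥S) (χ : ↥Dc) => (χ.1).1 (ι z.1) := by
    intro a b hab
    apply Subtype.ext
    apply hinj
    apply key a.1 a.2 b.1 b.2
    intro χ hχ
    exact congrFun hab ⟨χ, hχ⟩
  haveI := (hresc.isClosedEmbedding hinjres).isEmbedding.secondCountableTopology
  obtain ⟨T, hTc, hTd⟩ := TopologicalSpace.exists_countable_dense ↥S
  have hT'c : (ι '' (Subtype.val '' T)).Countable := (hTc.image _).image _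
  have hV : TopologicalSpace.IsSeparable
      (closure (Submodule.span ℝ (ι '' (Subtype.val '' T)) : Set E)) :=
    hT'c.isSeparable.span.closure
  apply hV.mono
  rintro - ⟨x, hxS, rfl⟩
  by_contra hx
  obtain ⟨f, u, hfu, hux⟩ := geometric_hahn_banach_closed_point
    ((Submodule.span ℝ (ι '' (Subtype.val '' T))).convex.closure) isClosed_closure hx
  have hspan0 : ∀ a ∈ Submodule.span ℝ (ι '' (Subtype.val '' T)), f a = 0 := by
    intro a ha
    by_contra hfa
    have hmem : ∀ t : ℝ, f (t • a) < u := fun t =>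
      hfu _ (subset_closure (Submodule.smul_mem _ t ha))
    have h4 := hmem ((|u| + 1) / f a)
    rw [_root_.map_smul, smul_eq_mul, div_mul_cancel₀ _ hfa] at h4
    have : u ≤ |u| := le_abs_self u
    linarith
  have hu0 : 0 < u := by
    have h5 := hfu 0 (subset_closure (Submodule.zero_mem _))
    simpa using h5
  have hxcl : x ∈ closure (Subtype.val '' T) := by
    have h6 : (⟨x, hxS⟩ : ↥S) ∈ closure T := hTd _
    exact closure_subtype.mp h6
  have hG : IsClosed {z : X | f (ι z) = 0} := isClosed_eq (hι f) continuous_const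
  have hTG : Subtype.val '' T ⊆ {z : X | f (ι z) = 0} := by
    rintro - ⟨t, ht, rfl⟩
    exact hspan0 _ (Submodule.subset_span (mem_image_of_mem ι (mem_image_of_mem _ ht)))
  have h7 : f (ι x) = 0 := closure_minimal hTG hG hxcl
  linarith

end RadProof

/-- Grothendieck's theorem, Theorem `Rad`: every finite Radon measure on
a weakly compact subset `K` of a Banach space (with the weak topology) has norm-separable
support. Here a finite Radon measure is a finite Borel measure which is inner regular with
respect to compact sets, and the support is the set of points all of whose open
neighborhoods have positive measure. -/
theorem radon_measure_support_norm_separable (E : Type*) [NormedAddCommGroup E]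
    [NormedSpace ℝ E] [CompleteSpace E] (K : Set E) (hK : @IsCompact E (weakTop ℝ E) K)
    (μ : @MeasureTheory.Measure ↥K (@borel ↥K (weakSubTop E K)))
    (hfin : μ Set.univ ≠ ⊤)
    (hreg : ∀ A : Set ↥K, @MeasurableSet ↥K (@borel ↥K (weakSubTop E K)) A →
      μ A = ⨆ (C : Set ↥K) (_ : C ⊆ A ∧ @IsCompact ↥K (weakSubTop E K) C), μ C) :
    TopologicalSpace.IsSeparable
      (Subtype.val '' {x : ↥K | ∀ U : Set ↥K,
        @IsOpen ↥K (weakSubTop E K) U → x ∈ U → μ U ≠ 0}) := by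
  classical
  letI tX : TopologicalSpace ↥K := weakSubTop E K
  letI mX : MeasurableSpace ↥K := borel ↥K
  haveI hBS : BorelSpace ↥K := ⟨rfl⟩
  haveI hCS : CompactSpace ↥K :=
    (@isCompact_iff_compactSpace E (weakTop ℝ E) K).mp hK
  haveI : MeasureTheory.IsFiniteMeasure μ := ⟨lt_top_iff_ne_top.mpr hfin⟩
  have hφw : ∀ φ : E →L[ℝ] ℝ, @Continuous E ℝ (weakTop ℝ E) _ φ := fun φ =>
    continuous_iff_le_induced.mpr
      (iInf_le (fun ψ : E →L[ℝ] ℝ => TopologicalSpace.induced ψ inferInstance) φ)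
  have hval : @Continuous ↥K E tX (weakTop ℝ E) Subtype.val := continuous_induced_dom
  have hι : ∀ φ : E →L[ℝ] ℝ, Continuous fun x : ↥K => φ x.1 := fun φ =>
    @Continuous.comp ↥K E ℝ tX (weakTop ℝ E) _ _ _ (hφw φ) hval
  -- boundedness of K via Banach–Steinhaus
  have hb : ∀ φ : E →L[ℝ] ℝ, ∃ C, ∀ x : ↥K, ‖φ x.1‖ ≤ C := by
    intro φ
    have himg : IsCompact ((fun x : ↥K => φ x.1) '' Set.univ) :=
      isCompact_univ.image (hι φ)
    obtain ⟨C, hC⟩ := isBounded_iff_forall_norm_le.mp himg.isBounded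
    exact ⟨C, fun x => hC _ (Set.mem_image_of_mem _ (Set.mem_univ x))⟩
  obtain ⟨M, hMb⟩ := banach_steinhaus
    (g := fun x : ↥K => NormedSpace.inclusionInDoubleDual ℝ E x.1)
    (fun φ => by
      obtain ⟨C, hC⟩ := hb φ
      exact ⟨C, fun x => by rw [NormedSpace.dual_def]; exact hC x⟩)
  have hM : ∀ x : ↥K, ‖(x : E)‖ ≤ M := by
    intro x
    have := hMb x
    rwa [show ‖NormedSpace.inclusionInDoubleDual ℝ E x.1‖ = ‖(x : E)‖ from
      (NormedSpace.inclusionInDoubleDualLi ℝ (E := E)).norm_map x.1] at this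
  -- the support set is closed
  set S : Set ↥K := {x : ↥K | ∀ U : Set ↥K, IsOpen U → x ∈ U → μ U ≠ 0} with hSdef
  have hScl : IsClosed S := by
    rw [← isOpen_compl_iff]
    apply isOpen_iff_forall_mem_open.mpr
    intro x hx
    simp only [Set.mem_compl_iff, hSdef, Set.mem_setOf_eq] at hx
    push_neg at hx
    obtain ⟨U, hUo, hxU, hU0⟩ := hx
    refine ⟨U, fun y hy hyS => (hyS U hUo hy) hU0, hUo, hxU⟩
  exact rad_main_abstract (Subtype.val : ↥K → E) hι Subtype.val_injective hM μ
    (fun x hx => hx) hScl
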